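/- Let H and G be simple graphs, a ≠ b two vertices of H, and f : H → G a graph homomorphism with f(a) = f(b). For every digraph homomorphism h : D₁ → D₂, the map h ⋆ H : D₁ ⋆ H → D₂ ⋆ H is a graph homomorphism and satisfies f_{D₁} = f_{D₂} ∘ (h ⋆ H); hence h ⋆ H is a morphism (D₁ ⋆ H, f_{D₁}) → (D₂ ⋆ H, f_{D₂}) in the slice category Gra/G. -/

import Mathlib

open SimpleGraph

attribute [local instance] Classical.propDecidable

/-- The vertex set of the arrow construction `D ⋆ H`: the disjoint union of `D` and
`E(D) × (V(H) ∖ {a, b})`, where `E(D)` is the set of edges of the digraph `(D, E)` and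
`a`, `b` are the two distinguished vertices of `H`. -/
def starVert (V : Type*) (a b : V) (D : Type*) (E : D → D → Prop) : Type _ :=
  D ⊕ ({p : D × D // E p.1 p.2} × {x : V // x ≠ a ∧ x ≠ b})

/-- For an edge `(u, v)` of the digraph `(D, E)`, the map
`φ_{(u,v)} : V(H) → V(D ⋆ H)` sending `a ↦ u`, `b ↦ v`, and `x ↦ (u, v, x)` otherwise. -/
noncomputable def starPhi {V : Type*} (a b : V) {D : Type*} {E : D → D → Prop}
    (u v : D) (huv : E u v) (x : V) : starVert V a b D E :=
  if hx : x = a then Sum.inl u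
  else if hx' : x = b then Sum.inl v
  else Sum.inr (⟨(u, v), huv⟩, ⟨x, hx, hx'⟩)

/-- The arrow construction `D ⋆ H` for a simple graph `H` with distinguished vertices
`a`, `b` and a digraph `(D, E)`: the edges are exactly the pairs
`(φ_{(u,v)} s, φ_{(u,v)} t)` for `(u, v) ∈ E(D)` and `(s, t) ∈ E(H)`. -/
noncomputable def starGraph {V : Type*} (H : SimpleGraph V) (a b : V)
    (D : Type*) (E : D → D → Prop) : SimpleGraph (starVert V a b D E) :=
  SimpleGraph.fromRel (fun x y => ∃ (u v : D) (huv : E u v) (s t : V),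
    H.Adj s t ∧ starPhi a b u v huv s = x ∧ starPhi a b u v huv t = y)

/-- Given a vertex map `f : V(H) → V(G)` (intended to satisfy `f a = f b`), the map
`f_D : V(D ⋆ H) → V(G)` sending every vertex of `D` to `f a` and `(u, v, y) ↦ f y`. -/
def starMap {V W : Type*} (f : V → W) (a b : V) {D : Type*} {E : D → D → Prop} :
    starVert V a b D E → W :=
  Sum.elim (fun _ => f a) (fun p => f p.2.val)

/-- Given a digraph homomorphism `h : (D₁, E₁) → (D₂, E₂)`, the map
`h ⋆ H : V(D₁ ⋆ H) → V(D₂ ⋆ H)` sending `x ↦ h x` for `x ∈ D₁` and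
`(u, v, w) ↦ (h u, h v, w)`. -/
def starMapHom {V : Type*} (a b : V) {D₁ D₂ : Type*}
    {E₁ : D₁ → D₁ → Prop} {E₂ : D₂ → D₂ → Prop}
    (h : D₁ → D₂) (hh : ∀ u v, E₁ u v → E₂ (h u) (h v)) :
    starVert V a b D₁ E₁ → starVert V a b D₂ E₂ :=
  Sum.elim (fun x => Sum.inl (h x))
    (fun p => Sum.inr (⟨(h p.1.val.1, h p.1.val.2), hh _ _ p.1.prop⟩, p.2))

/-- Let `H` and `G` be simple graphs, `a ≠ b` two vertices of `H`, and `f : H → G` a graph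
homomorphism with `f a = f b`. For every digraph homomorphism `h : (D₁, E₁) → (D₂, E₂)`, the
map `h ⋆ H : D₁ ⋆ H → D₂ ⋆ H` is a graph homomorphism and satisfies
`f_{D₁} = f_{D₂} ∘ (h ⋆ H)`; hence `h ⋆ H` is a morphism
`(D₁ ⋆ H, f_{D₁}) → (D₂ ⋆ H, f_{D₂})` in the slice category `Gra/G`. -/

lemma starMapHom_phi {V : Type*} (a b : V) {D₁ D₂ : Type*}
    {E₁ : D₁ → D₁ → Prop} {E₂ : D₂ → D₂ → Prop}
    (h : D₁ → D₂) (hh : ∀ u v, E₁ u v → E₂ (h u) (h v))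
    (u v : D₁) (huv : E₁ u v) (x : V) :
    starMapHom a b h hh (starPhi a b u v huv x)
      = starPhi a b (h u) (h v) (hh u v huv) x := by
  by_cases h1 : x = a
  · have e1 : starPhi a b u v huv x = Sum.inl u := dif_pos h1
    have e2 : starPhi a b (h u) (h v) (hh u v huv) x = Sum.inl (h u) := dif_pos h1
    rw [e1, e2]; rfl
  · by_cases h2 : x = b
    · have e1 : starPhi a b u v huv x = Sum.inl v := (dif_neg h1).trans (dif_pos h2)
      have e2 : starPhi a b (h u) (h v) (hh u v huv) x = Sum.inl (h v) :=
        (dif_neg h1).trans (dif_pos h2)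
      rw [e1, e2]; rfl
    · have e1 : starPhi a b u v huv x = Sum.inr (⟨(u, v), huv⟩, ⟨x, h1, h2⟩) :=
        (dif_neg h1).trans (dif_neg h2)
      have e2 : starPhi a b (h u) (h v) (hh u v huv) x
          = Sum.inr (⟨(h u, h v), hh u v huv⟩, ⟨x, h1, h2⟩) :=
        (dif_neg h1).trans (dif_neg h2)
      rw [e1, e2]; rfl

lemma starPhi_ne {V : Type*} {a b : V} {D : Type*} {E : D → D → Prop}
    (u v : D) (huv : E u v) {s t : V} (hst : s ≠ t)
    (h1 : ¬(s = a ∧ t = b)) (h2 : ¬(s = b ∧ t = a)) :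
    starPhi a b u v huv s ≠ starPhi a b u v huv t := by
  unfold starPhi
  by_cases hsa : s = a <;> by_cases hsb : s = b <;> by_cases hta : t = a <;>
    by_cases htb : t = b <;>
    simp_all <;>
    first
    | exact fun hc => hst (congrArg (starMap (id : V → V) a b) hc)
    | exact fun hc => Sum.inl_ne_inr hc
    | exact fun hc => Sum.inr_ne_inl hc

theorem stmt7 {V W : Type*} (H : SimpleGraph V) (G : SimpleGraph W)
    (a b : V) (hab : a ≠ b) (f : H →g G) (hf : f a = f b)
    {D₁ D₂ : Type*} (E₁ : D₁ → D₁ → Prop) (E₂ : D₂ → D₂ → Prop)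
    (h : D₁ → D₂) (hh : ∀ u v, E₁ u v → E₂ (h u) (h v)) :
    (∀ x y : starVert V a b D₁ E₁, (starGraph H a b D₁ E₁).Adj x y →
      (starGraph H a b D₂ E₂).Adj (starMapHom a b h hh x) (starMapHom a b h hh y)) ∧
    (∀ x : starVert V a b D₁ E₁,
      starMap (⇑f) a b x = starMap (⇑f) a b (starMapHom a b h hh x)) := by
  have hHab : ¬ H.Adj a b := fun hadj => G.loopless.irrefl _ (hf ▸ f.map_adj hadj)
  have key : ∀ x y : starVert V a b D₁ E₁,
      (∃ u v, ∃ (huv : E₁ u v), ∃ s t, H.Adj s t ∧ starPhi a b u v huv s = x ∧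
        starPhi a b u v huv t = y) →
      (∃ u v, ∃ (huv : E₂ u v), ∃ s t, H.Adj s t ∧
        starPhi a b u v huv s = starMapHom a b h hh x ∧
        starPhi a b u v huv t = starMapHom a b h hh y) ∧
      starMapHom a b h hh x ≠ starMapHom a b h hh y := by
    rintro x y ⟨u, v, huv, s, t, hst, rfl, rfl⟩
    have hns : ¬(s = a ∧ t = b) := by
      rintro ⟨rfl, rfl⟩; exact hHab hst
    have hnt : ¬(s = b ∧ t = a) := by
      rintro ⟨rfl, rfl⟩; exact hHab hst.symm
    rw [starMapHom_phi, starMapHom_phi]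
    exact ⟨⟨h u, h v, hh u v huv, s, t, hst, rfl, rfl⟩,
      starPhi_ne _ _ _ hst.ne hns hnt⟩
  constructor
  · intro x y hxy
    rw [_root_.starGraph, fromRel_adj] at hxy ⊢
    rcases hxy with ⟨-, hxy | hyx⟩
    · obtain ⟨hrel, hne⟩ := key x y hxy
      exact ⟨hne, Or.inl hrel⟩
    · obtain ⟨hrel, hne⟩ := key y x hyx
      exact ⟨hne.symm, Or.inr hrel⟩
  · rintro (x | p) <;> rfl
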